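/- Let M ≥ 1, let (χ_m)_{m=1}^M and (κ_m)_{m=1}^M be orthonormal bases of C^M, let p : Fin M → ℝ be nonnegative, and let J ≠ K be indices with p_J ≥ p_K, and let δ be a real number with 0 < δ ≤ p_K. Define r : Fin M → ℝ by r_J = p_J + δ, r_K = p_K − δ, and r_m = p_m for m ≠ J, K. Set Ψ = ∑_{m=1}^M √(p_m) · (χ_m ⊗ κ_m) and Ξ = ∑_{m=1}^M √(r_m) · (χ_m ⊗ κ_m). Then there exist matrices C, D ∈ M_M(ℂ) with C†C + D†D = 1 and unitary matrices U, V ∈ M_M(ℂ) such that (C⊗U)|Ψ⟩⟨Ψ|(C⊗U)† + (D⊗V)|Ψ⟩⟨Ψ|(D⊗V)† = |Ξ⟩⟨Ξ|. -/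

import Mathlib

open scoped BigOperators Classical ComplexOrder
open Matrix Kronecker Filter

noncomputable section

/-! ### Vectors and states -/

/-- The standard inner product on `ι → ℂ`. -/
def cdot {ι : Type*} [Fintype ι] (u v : ι → ℂ) : ℂ := ∑ i, star (u i) * v i

/-- A unit vector. -/
def UnitVec {ι : Type*} [Fintype ι] (ψ : ι → ℂ) : Prop := cdot ψ ψ = 1

/-- An orthonormal family of vectors. -/
def OrthonormalFam {κ ι : Type*} [Fintype ι] (χ : κ → ι → ℂ) : Prop :=
  ∀ i j, cdot (χ i) (χ j) = if i = j then 1 else 0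

/-- Tensor product of vectors in `C^a` and `C^b`. -/
def tensorVec {a b : ℕ} (u : Fin a → ℂ) (v : Fin b → ℂ) : Fin a × Fin b → ℂ :=
  fun p => u p.1 * v p.2

/-- The rank-one operator `|ψ⟩⟨ψ|`. -/
def projVec {ι : Type*} (ψ : ι → ℂ) : Matrix ι ι ℂ :=
  Matrix.of fun p q => ψ p * star (ψ q)

/-- A (mixed) quantum state: a positive semidefinite matrix of trace one. -/
def IsState {ι : Type*} [Fintype ι] (ρ : Matrix ι ι ℂ) : Prop :=
  ρ.PosSemidef ∧ ρ.trace = 1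

/-- A pure state: a rank-one projection `|ψ⟩⟨ψ|` onto a unit vector. -/
def IsPureState {ι : Type*} [Fintype ι] (ρ : Matrix ι ι ℂ) : Prop :=
  ∃ ψ : ι → ℂ, UnitVec ψ ∧ ρ = projVec ψ

/-- A separable (disentangled) state: a finite convex combination of product states. -/
def IsSepState {a b : ℕ} (ρ : Matrix (Fin a × Fin b) (Fin a × Fin b) ℂ) : Prop :=
  ∃ (k : ℕ) (r : Fin k → ℝ) (ρA : Fin k → Matrix (Fin a) (Fin a) ℂ)
    (ρB : Fin k → Matrix (Fin b) (Fin b) ℂ),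
    (∀ i, 0 ≤ r i) ∧ (∑ i, r i = 1) ∧
    (∀ i, (ρA i).PosSemidef ∧ (ρA i).trace = 1) ∧
    (∀ i, (ρB i).PosSemidef ∧ (ρB i).trace = 1) ∧
    ρ = ∑ i, r i • (ρA i ⊗ₖ ρB i)

/-! ### Partial trace, Schmidt coefficients, reduced von Neumann entropy -/

/-- Partial trace over the second tensor factor. -/
def ptraceB {a b : ℕ} (ρ : Matrix (Fin a × Fin b) (Fin a × Fin b) ℂ) :
    Matrix (Fin a) (Fin a) ℂ :=
  Matrix.of fun i j => ∑ k : Fin b, ρ (i, k) (j, k)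

theorem ptraceB_projVec_isHermitian {a b : ℕ} (ψ : Fin a × Fin b → ℂ) :
    (ptraceB (projVec ψ)).IsHermitian := by
  show (ptraceB (projVec ψ))ᴴ = ptraceB (projVec ψ)
  ext i j
  simp only [Matrix.conjTranspose_apply, ptraceB, Matrix.of_apply, projVec, star_sum, star_mul',
    star_star]
  exact Finset.sum_congr rfl fun k _ => mul_comm _ _

/-- The Schmidt coefficients of a vector `ψ ∈ C^a ⊗ C^b`: the eigenvalues (with multiplicity)
of the partial trace over the second factor of `|ψ⟩⟨ψ|`. -/
def schmidtCoeffs {a b : ℕ} (ψ : Fin a × Fin b → ℂ) : Fin a → ℝ :=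
  (ptraceB_projVec_isHermitian ψ).eigenvalues

/-- The reduced von Neumann entropy of the pure state `|ψ⟩⟨ψ|`. -/
def SvN {a b : ℕ} (ψ : Fin a × Fin b → ℂ) : ℝ :=
  -∑ i, schmidtCoeffs ψ i * Real.logb 2 (schmidtCoeffs ψ i)

/-- The number of nonzero Schmidt coefficients. -/
def schmidtRank {a b : ℕ} (ψ : Fin a × Fin b → ℂ) : ℕ :=
  (Finset.univ.filter fun i => schmidtCoeffs ψ i ≠ 0).card

/-- The largest Schmidt coefficient. -/
def maxSchmidt {a b : ℕ} (ψ : Fin a × Fin b → ℂ) : ℝ := ⨆ i, schmidtCoeffs ψ i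

/-- A representative of the maximally entangled state `P₊^d`: a pure state exactly `d` of whose
Schmidt coefficients are nonzero, all equal to `1/d`. -/
def IsMaxEntRep {a b : ℕ} (d : ℕ) (ρ : Matrix (Fin a × Fin b) (Fin a × Fin b) ℂ) : Prop :=
  ∃ ψ : Fin a × Fin b → ℂ, UnitVec ψ ∧ ρ = projVec ψ ∧
    (∀ i, schmidtCoeffs ψ i = 0 ∨ schmidtCoeffs ψ i = 1 / d) ∧
    schmidtRank ψ = d

/-- The standard maximally entangled vector `Ψ₊ = (1/√d) ∑ᵢ eᵢ ⊗ eᵢ` on `C^d ⊗ C^d`. -/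
def maxEntVec (d : ℕ) : Fin d × Fin d → ℂ :=
  fun p => if p.1 = p.2 then ((1 / Real.sqrt d : ℝ) : ℂ) else 0

/-! ### Trace norm -/

/-- The trace norm of a square complex matrix: the sum of its singular values. -/
def traceNorm {ι : Type*} [Fintype ι] [DecidableEq ι] (A : Matrix ι ι ℂ) : ℝ :=
  ∑ i, Real.sqrt ((Matrix.posSemidef_conjTranspose_mul_self A).isHermitian.eigenvalues i)

/-! ### Kronecker products of bipartite states, with the canonical local reindexing -/

/-- The canonical regrouping of indices identifying `(C^a⊗C^b)⊗(C^c⊗C^d)` with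
`C^{ac}⊗C^{bd}`. -/
def pairEquiv (a b c d : ℕ) : ((Fin a × Fin b) × Fin c × Fin d) ≃ Fin (a * c) × Fin (b * d) :=
  (Equiv.prodProdProdComm (Fin a) (Fin b) (Fin c) (Fin d)).trans
    (Equiv.prodCongr finProdFinEquiv finProdFinEquiv)

/-- Kronecker product of two bipartite states, regarded (after the canonical local reindexing)
as a state on `C^{ac}⊗C^{bd}`. -/
def stateKron {a b c d : ℕ} (ρ : Matrix (Fin a × Fin b) (Fin a × Fin b) ℂ)
    (σ : Matrix (Fin c × Fin d) (Fin c × Fin d) ℂ) :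
    Matrix (Fin (a * c) × Fin (b * d)) (Fin (a * c) × Fin (b * d)) ℂ :=
  Matrix.reindex (pairEquiv a b c d) (pairEquiv a b c d) (ρ ⊗ₖ σ)

/-- The `n`-fold Kronecker power `ρ^{⊗n}` of a bipartite state, regarded (after the canonical
local reindexing grouping the `n` A-factors and the `n` B-factors) as a state on
`C^{a^n}⊗C^{b^n}`. -/
def statePow {a b : ℕ} (ρ : Matrix (Fin a × Fin b) (Fin a × Fin b) ℂ) :
    (n : ℕ) → Matrix (Fin (a ^ n) × Fin (b ^ n)) (Fin (a ^ n) × Fin (b ^ n)) ℂ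
  | 0 => 1
  | n + 1 =>
      Matrix.reindex
        (Equiv.prodCongr (finCongr (pow_succ a n).symm) (finCongr (pow_succ b n).symm))
        (Equiv.prodCongr (finCongr (pow_succ a n).symm) (finCongr (pow_succ b n).symm))
        (stateKron (statePow ρ n) ρ)

/-! ### LQCC operations -/

/-- The data of an LQCC protocol from `C^a⊗C^b` to `C^{a'}⊗C^{b'}`: `n ≥ 1` rounds; intermediate
local dimensions; at step `2k` Alice applies operators `V k`, at step `2k+1` Bob applies
operators `W k`, each labelled by a classical outcome and allowed to depend on all outcomes
obtained so far, and each family summing (over its own outcome) to the identity. -/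
structure LQCCProtocol (a b a' b' : ℕ) where
  n : ℕ
  npos : 0 < n
  adim : ℕ → ℕ
  bdim : ℕ → ℕ
  ha0 : adim 0 = a
  hb0 : bdim 0 = b
  han : adim n = a'
  hbn : bdim n = b'
  /-- the number of classical outcomes at each of the `2n` steps -/
  K : Fin (2 * n) → ℕ
  V : ∀ k : ℕ, (∀ s : Fin (2 * n), Fin (K s)) →
      Matrix (Fin (adim (k + 1))) (Fin (adim k)) ℂ
  W : ∀ k : ℕ, (∀ s : Fin (2 * n), Fin (K s)) →
      Matrix (Fin (bdim (k + 1))) (Fin (bdim k)) ℂ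
  /-- Alice's round-`k` operator depends only on the outcomes of steps `≤ 2k`. -/
  hVdep : ∀ (k : ℕ) (i i' : ∀ s : Fin (2 * n), Fin (K s)),
      (∀ s : Fin (2 * n), (s : ℕ) ≤ 2 * k → i s = i' s) → V k i = V k i'
  /-- Bob's round-`k` operator depends only on the outcomes of steps `≤ 2k+1`. -/
  hWdep : ∀ (k : ℕ) (i i' : ∀ s : Fin (2 * n), Fin (K s)),
      (∀ s : Fin (2 * n), (s : ℕ) ≤ 2 * k + 1 → i s = i' s) → W k i = W k i'
  hVnorm : ∀ (k : ℕ) (hk : k < n) (i : ∀ s : Fin (2 * n), Fin (K s)),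
      ∑ j : Fin (K ⟨2 * k, by omega⟩),
        (V k (Function.update i ⟨2 * k, by omega⟩ j))ᴴ *
          V k (Function.update i ⟨2 * k, by omega⟩ j) = 1
  hWnorm : ∀ (k : ℕ) (hk : k < n) (i : ∀ s : Fin (2 * n), Fin (K s)),
      ∑ j : Fin (K ⟨2 * k + 1, by omega⟩),
        (W k (Function.update i ⟨2 * k + 1, by omega⟩ j))ᴴ *
          W k (Function.update i ⟨2 * k + 1, by omega⟩ j) = 1

namespace LQCCProtocol

variable {a b a' b' : ℕ} (P : LQCCProtocol a b a' b')

/-- The type of full classical outcome histories of a protocol. -/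
abbrev Hist : Type := ∀ s : Fin (2 * P.n), Fin (P.K s)

/-- The product `(1⊗W_{k-1})(V_{k-1}⊗1)⋯(1⊗W₀)(V₀⊗1)` of the first `k` rounds of operators,
for a given outcome history. -/
def partialOp (i : P.Hist) :
    (k : ℕ) → Matrix (Fin (P.adim k) × Fin (P.bdim k)) (Fin (P.adim 0) × Fin (P.bdim 0)) ℂ
  | 0 => 1
  | k + 1 =>
      (((1 : Matrix (Fin (P.adim (k + 1))) (Fin (P.adim (k + 1))) ℂ) ⊗ₖ P.W k i) *
        (P.V k i ⊗ₖ (1 : Matrix (Fin (P.bdim k)) (Fin (P.bdim k)) ℂ))) *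
        partialOp i k

/-- The total Kraus operator `V_{i₁…i_{2n}}` of a protocol for a given outcome history. -/
def totalOp (i : P.Hist) : Matrix (Fin a' × Fin b') (Fin a × Fin b) ℂ :=
  Matrix.reindex (Equiv.prodCongr (finCongr P.han) (finCongr P.hbn))
    (Equiv.prodCongr (finCongr P.ha0) (finCongr P.hb0)) (P.partialOp i P.n)

end LQCCProtocol

/-- A map on matrices is an LQCC operation if it is implemented by some LQCC protocol:
`Λ(σ) = ∑ᵢ Vᵢ σ Vᵢᴴ` over all outcome histories `i`. -/
def IsLQCC {a b a' b' : ℕ}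
    (Λ : Matrix (Fin a × Fin b) (Fin a × Fin b) ℂ →
      Matrix (Fin a' × Fin b') (Fin a' × Fin b') ℂ) : Prop :=
  ∃ P : LQCCProtocol a b a' b',
    ∀ σ, Λ σ = ∑ i : P.Hist, P.totalOp i * σ * (P.totalOp i)ᴴ

/-! ### Entanglement measures and the standard conditions -/

/-- A family assigning a real number to every bipartite density matrix, for all dimensions. -/
def EntFun : Type :=
  ∀ (a b : ℕ), Matrix (Fin a × Fin b) (Fin a × Fin b) ℂ → ℝ

/-- Nonnegativity on (mixed) states. -/
def MixedNonneg (E : EntFun) : Prop :=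
  ∀ (a b : ℕ) (ρ : Matrix (Fin a × Fin b) (Fin a × Fin b) ℂ), IsState ρ → 0 ≤ E a b ρ

/-- Nonnegativity on pure states. -/
def PureNonneg (E : EntFun) : Prop :=
  ∀ (a b : ℕ) (ψ : Fin a × Fin b → ℂ), UnitVec ψ → 0 ≤ E a b (projVec ψ)

/-- Invariance under conjugation by local unitaries, on states. -/
def MixedLocalUnitaryInv (E : EntFun) : Prop :=
  ∀ (a b : ℕ) (ρ : Matrix (Fin a × Fin b) (Fin a × Fin b) ℂ), IsState ρ →
    ∀ (U : Matrix (Fin a) (Fin a) ℂ) (V : Matrix (Fin b) (Fin b) ℂ),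
      U ∈ Matrix.unitaryGroup (Fin a) ℂ → V ∈ Matrix.unitaryGroup (Fin b) ℂ →
      E a b ((U ⊗ₖ V) * ρ * (U ⊗ₖ V)ᴴ) = E a b ρ

/-- Invariance under conjugation by local unitaries, on pure states. -/
def PureLocalUnitaryInv (E : EntFun) : Prop :=
  ∀ (a b : ℕ) (ρ : Matrix (Fin a × Fin b) (Fin a × Fin b) ℂ), IsPureState ρ →
    ∀ (U : Matrix (Fin a) (Fin a) ℂ) (V : Matrix (Fin b) (Fin b) ℂ),
      U ∈ Matrix.unitaryGroup (Fin a) ℂ → V ∈ Matrix.unitaryGroup (Fin b) ℂ →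
      E a b ((U ⊗ₖ V) * ρ * (U ⊗ₖ V)ᴴ) = E a b ρ

/-- (E0): separable states have zero entanglement. -/
def CondE0 (E : EntFun) : Prop :=
  ∀ (a b : ℕ) (ρ : Matrix (Fin a × Fin b) (Fin a × Fin b) ℂ), IsState ρ → IsSepState ρ →
    E a b ρ = 0

/-- (E1)=(P1): normalization on representatives of the maximally entangled states. -/
def CondE1 (E : EntFun) : Prop :=
  ∀ (a b d : ℕ), 1 ≤ d → ∀ P : Matrix (Fin a × Fin b) (Fin a × Fin b) ℂ,
    IsMaxEntRep d P → E a b P = Real.logb 2 d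

/-- (E2): monotonicity under LQCC operations. -/
def CondE2 (E : EntFun) : Prop :=
  ∀ (a b a' b' : ℕ)
    (Λ : Matrix (Fin a × Fin b) (Fin a × Fin b) ℂ →
      Matrix (Fin a' × Fin b') (Fin a' × Fin b') ℂ)
    (σ : Matrix (Fin a × Fin b) (Fin a × Fin b) ℂ),
    IsState σ → IsLQCC Λ → E a' b' (Λ σ) ≤ E a b σ

/-- (E3): asymptotic continuity. -/
def CondE3 (E : EntFun) : Prop :=
  ∀ (A B : ℕ → ℕ) (ρ σ : ∀ n : ℕ, Matrix (Fin (A n) × Fin (B n)) (Fin (A n) × Fin (B n)) ℂ),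
    (∀ n, IsState (ρ n)) → (∀ n, IsState (σ n)) →
    Tendsto (fun n => traceNorm (ρ n - σ n)) atTop (nhds 0) →
    Tendsto (fun n =>
      (E (A n) (B n) (ρ n) - E (A n) (B n) (σ n)) / (1 + Real.logb 2 ((A n : ℝ) * (B n : ℝ))))
      atTop (nhds 0)

/-- (E3'): asymptotic continuity, where the first sequence consists of pure states. -/
def CondE3' (E : EntFun) : Prop :=
  ∀ (A B : ℕ → ℕ) (ρ σ : ∀ n : ℕ, Matrix (Fin (A n) × Fin (B n)) (Fin (A n) × Fin (B n)) ℂ),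
    (∀ n, IsPureState (ρ n)) → (∀ n, IsState (σ n)) →
    Tendsto (fun n => traceNorm (ρ n - σ n)) atTop (nhds 0) →
    Tendsto (fun n =>
      (E (A n) (B n) (ρ n) - E (A n) (B n) (σ n)) / (1 + Real.logb 2 ((A n : ℝ) * (B n : ℝ))))
      atTop (nhds 0)

/-- (E4): additivity. -/
def CondE4 (E : EntFun) : Prop :=
  ∀ (a b : ℕ) (ρ : Matrix (Fin a × Fin b) (Fin a × Fin b) ℂ), IsState ρ →
    ∀ n : ℕ, 1 ≤ n → E (a ^ n) (b ^ n) (statePow ρ n) = n * E a b ρ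

/-- (E4'): asymptotic additivity. -/
def CondE4' (E : EntFun) : Prop :=
  ∀ (a b : ℕ) (ρ : Matrix (Fin a × Fin b) (Fin a × Fin b) ℂ), IsState ρ →
    ∀ ε : ℝ, 0 < ε → ∃ N : ℕ, 0 < N ∧ ∀ n : ℕ, N ≤ n →
      E (a ^ n) (b ^ n) (statePow ρ n) / n - ε ≤ E a b ρ ∧
      E a b ρ ≤ E (a ^ n) (b ^ n) (statePow ρ n) / n + ε

/-- (E5): subadditivity. -/
def CondE5 (E : EntFun) : Prop :=
  ∀ (a b c d : ℕ) (ρ : Matrix (Fin a × Fin b) (Fin a × Fin b) ℂ)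
    (σ : Matrix (Fin c × Fin d) (Fin c × Fin d) ℂ), IsState ρ → IsState σ →
    E (a * c) (b * d) (stateKron ρ σ) ≤ E a b ρ + E c d σ

/-- (E5''): existence of the regularization. -/
def CondE5'' (E : EntFun) : Prop :=
  ∀ (a b : ℕ) (ρ : Matrix (Fin a × Fin b) (Fin a × Fin b) ℂ), IsState ρ →
    ∃ L : ℝ, Tendsto (fun n : ℕ => E (a ^ n) (b ^ n) (statePow ρ n) / n) atTop (nhds L)

/-- (E6): convexity. -/
def CondE6 (E : EntFun) : Prop :=
  ∀ (a b : ℕ) (ρ σ : Matrix (Fin a × Fin b) (Fin a × Fin b) ℂ), IsState ρ → IsState σ →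
    ∀ l : ℝ, 0 ≤ l → l ≤ 1 →
      E a b (l • ρ + (1 - l) • σ) ≤ l * E a b ρ + (1 - l) * E a b σ

/-- (E6'): convexity on finite decompositions into pure states. -/
def CondE6' (E : EntFun) : Prop :=
  ∀ (a b k : ℕ) (p : Fin k → ℝ) (ψ : Fin k → Fin a × Fin b → ℂ),
    (∀ i, 0 ≤ p i) → (∑ i, p i = 1) → (∀ i, UnitVec (ψ i)) →
    E a b (∑ i, p i • projVec (ψ i)) ≤ ∑ i, p i * E a b (projVec (ψ i))

/-- (P0): separable pure states have zero entanglement. -/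
def CondP0 (E : EntFun) : Prop :=
  ∀ (a b : ℕ) (ψA : Fin a → ℂ) (ψB : Fin b → ℂ), UnitVec (tensorVec ψA ψB) →
    E a b (projVec (tensorVec ψA ψB)) = 0

/-- (P1): normalization (same as (E1)). -/
def CondP1 (E : EntFun) : Prop := CondE1 E

/-- (P1'): `E(P₊(C²)) = 1`. -/
def CondP1' (E : EntFun) : Prop := E 2 2 (projVec (maxEntVec 2)) = 1

/-- (P2): monotonicity under LQCC operations mapping pure states to pure states. -/
def CondP2 (E : EntFun) : Prop :=
  ∀ (a b a' b' : ℕ)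
    (Λ : Matrix (Fin a × Fin b) (Fin a × Fin b) ℂ →
      Matrix (Fin a' × Fin b') (Fin a' × Fin b') ℂ)
    (σ : Matrix (Fin a × Fin b) (Fin a × Fin b) ℂ),
    IsPureState σ → IsLQCC Λ → IsPureState (Λ σ) → E a' b' (Λ σ) ≤ E a b σ

/-- (P3): asymptotic continuity on pure states. -/
def CondP3 (E : EntFun) : Prop :=
  ∀ (A B : ℕ → ℕ) (ρ σ : ∀ n : ℕ, Matrix (Fin (A n) × Fin (B n)) (Fin (A n) × Fin (B n)) ℂ),
    (∀ n, IsPureState (ρ n)) → (∀ n, IsPureState (σ n)) →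
    Tendsto (fun n => traceNorm (ρ n - σ n)) atTop (nhds 0) →
    Tendsto (fun n =>
      (E (A n) (B n) (ρ n) - E (A n) (B n) (σ n)) / (1 + Real.logb 2 ((A n : ℝ) * (B n : ℝ))))
      atTop (nhds 0)

/-- (P4): additivity on pure states. -/
def CondP4 (E : EntFun) : Prop :=
  ∀ (a b : ℕ) (ψ : Fin a × Fin b → ℂ), UnitVec ψ →
    ∀ n : ℕ, 1 ≤ n →
      E (a ^ n) (b ^ n) (statePow (projVec ψ) n) = n * E a b (projVec ψ)

/-- (P4'): asymptotic additivity on pure states. -/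
def CondP4' (E : EntFun) : Prop :=
  ∀ (a b : ℕ) (ψ : Fin a × Fin b → ℂ), UnitVec ψ →
    ∀ ε : ℝ, 0 < ε → ∃ N : ℕ, 0 < N ∧ ∀ n : ℕ, N ≤ n →
      E (a ^ n) (b ^ n) (statePow (projVec ψ) n) / n - ε ≤ E a b (projVec ψ) ∧
      E a b (projVec ψ) ≤ E (a ^ n) (b ^ n) (statePow (projVec ψ) n) / n + ε

/-! ### Entanglement of distillation and entanglement cost -/

/-- The distillable entanglement `E_D`. -/
def ED {a b : ℕ} (ρ : Matrix (Fin a × Fin b) (Fin a × Fin b) ℂ) : ℝ :=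
  sSup {r : ℝ |
    ∃ (d : ℕ → ℕ)
      (Λ : ∀ n : ℕ, Matrix (Fin (a ^ n) × Fin (b ^ n)) (Fin (a ^ n) × Fin (b ^ n)) ℂ →
        Matrix (Fin (a ^ n) × Fin (b ^ n)) (Fin (a ^ n) × Fin (b ^ n)) ℂ)
      (P : ∀ n : ℕ, Matrix (Fin (a ^ n) × Fin (b ^ n)) (Fin (a ^ n) × Fin (b ^ n)) ℂ),
      (∀ n, 0 < d n) ∧ (∀ n, IsLQCC (Λ n)) ∧ (∀ n, IsMaxEntRep (d n) (P n)) ∧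
      Tendsto (fun n => traceNorm (P n - Λ n (statePow ρ n))) atTop (nhds 0) ∧
      r = Filter.limsup (fun n : ℕ => Real.logb 2 (d n) / n) atTop}

/-- The entanglement cost `E_C`. -/
def EC {a b : ℕ} (ρ : Matrix (Fin a × Fin b) (Fin a × Fin b) ℂ) : ℝ :=
  sInf {r : ℝ |
    ∃ (d : ℕ → ℕ)
      (Λ : ∀ n : ℕ, Matrix (Fin (d n) × Fin (d n)) (Fin (d n) × Fin (d n)) ℂ →
        Matrix (Fin (a ^ n) × Fin (b ^ n)) (Fin (a ^ n) × Fin (b ^ n)) ℂ)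
      (P : ∀ n : ℕ, Matrix (Fin (d n) × Fin (d n)) (Fin (d n) × Fin (d n)) ℂ),
      (∀ n, 0 < d n) ∧ (∀ n, IsLQCC (Λ n)) ∧ (∀ n, IsMaxEntRep (d n) (P n)) ∧
      Tendsto (fun n => traceNorm (Λ n (P n) - statePow ρ n)) atTop (nhds 0) ∧
      r = Filter.liminf (fun n : ℕ => Real.logb 2 (d n) / n) atTop}


/-! ### Majorization and composition of families of maps -/

/-- For vectors arranged in decreasing order, `MajorizesDesc q p` says that `q` majorizes `p`:
for every `k`, the sum of the `k` largest entries of `q` is at least that of `p`. -/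
def MajorizesDesc {M : ℕ} (q p : Fin M → ℝ) : Prop :=
  ∀ k : ℕ, k ≤ M →
    ∑ i ∈ Finset.univ.filter (fun i : Fin M => (i : ℕ) < k), p i ≤
      ∑ i ∈ Finset.univ.filter (fun i : Fin M => (i : ℕ) < k), q i

/-- `composeFam N f = f 0 ∘ f 1 ∘ ⋯ ∘ f (N-1)` (the identity for `N = 0`). -/
def composeFam {α : Type*} : (N : ℕ) → (Fin N → α → α) → α → α
  | 0, _ => id
  | N + 1, f => f 0 ∘ composeFam N (fun i => f i.succ)

end
noncomputable section

namespace NielsenAux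

variable {M : ℕ}

def outer (u v : Fin M → ℂ) : Matrix (Fin M) (Fin M) ℂ :=
  Matrix.of fun i j => u i * star (v j)

lemma outer_mulVec (u v w : Fin M → ℂ) : (outer u v).mulVec w = cdot v w • u := by
  ext i
  simp [outer, Matrix.mulVec, dotProduct, cdot, Finset.mul_sum, Finset.sum_mul]
  exact Finset.sum_congr rfl fun j _ => by ring

lemma outer_conjTranspose (u v : Fin M → ℂ) : (outer u v)ᴴ = outer v u := by
  ext i j; simp [outer, Matrix.conjTranspose_apply, mul_comm]

lemma outer_mul_outer (u v u' v' : Fin M → ℂ) :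
    outer u v * outer u' v' = cdot v u' • outer u v' := by
  ext i j
  simp [outer, Matrix.mul_apply, cdot, Finset.sum_mul, Finset.mul_sum]
  exact Finset.sum_congr rfl fun k _ => by ring

lemma sum_outer_eq_one {χ : Fin M → Fin M → ℂ} (hχ : OrthonormalFam χ) :
    ∑ m, outer (χ m) (χ m) = 1 := by
  set A : Matrix (Fin M) (Fin M) ℂ := Matrix.of fun i m => χ m i with hA
  have h1 : Aᴴ * A = 1 := by
    ext m m'
    have h := hχ m m'
    simp only [cdot] at h
    simp only [Matrix.mul_apply, hA, Matrix.of_apply, Matrix.conjTranspose_apply,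
      Matrix.one_apply]
    rw [h]
    by_cases hmm : m = m' <;> simp [hmm]
  have h2 : A * Aᴴ = 1 := mul_eq_one_comm.mp h1
  calc ∑ m, outer (χ m) (χ m) = A * Aᴴ := by
        ext i j
        simp [Matrix.sum_apply, outer, Matrix.mul_apply, hA]
    _ = 1 := h2

lemma conj_projVec {ι : Type*} [Fintype ι] (A : Matrix ι ι ℂ) (ψ : ι → ℂ) :
    A * projVec ψ * Aᴴ = projVec (A.mulVec ψ) := by
  ext i j
  simp only [Matrix.mul_apply, projVec, Matrix.of_apply, Matrix.conjTranspose_apply,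
    Matrix.mulVec, dotProduct, star_sum, star_mul', Finset.mul_sum, Finset.sum_mul]
  refine Finset.sum_congr rfl fun k _ => Finset.sum_congr rfl fun l _ => by ring

lemma projVec_smul {ι : Type*} (z : ℂ) (ψ : ι → ℂ) :
    projVec (z • ψ) = (z * star z) • projVec ψ := by
  ext i j
  simp [projVec, Matrix.smul_apply]
  ring

lemma kron_mulVec {a b : ℕ} (A : Matrix (Fin a) (Fin a) ℂ) (B : Matrix (Fin b) (Fin b) ℂ)
    (u : Fin a → ℂ) (v : Fin b → ℂ) :
    (A ⊗ₖ B).mulVec (tensorVec u v) = tensorVec (A.mulVec u) (B.mulVec v) := by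
  ext ⟨i, j⟩
  simp only [Matrix.mulVec, dotProduct, tensorVec, Fintype.sum_prod_type,
    Matrix.kroneckerMap_apply, Finset.sum_mul, Finset.mul_sum]
  rw [Finset.sum_comm]
  refine Finset.sum_congr rfl fun k _ => Finset.sum_congr rfl fun l _ => by ring

lemma mulVec_sum {ι : Type*} [Fintype ι] (A : Matrix ι ι ℂ) {κ : Type*} (s : Finset κ)
    (f : κ → ι → ℂ) : A.mulVec (∑ k ∈ s, f k) = ∑ k ∈ s, A.mulVec (f k) := by
  ext i
  simp [Matrix.mulVec, dotProduct, Finset.mul_sum, Finset.sum_apply]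
  rw [Finset.sum_comm]

end NielsenAux

namespace NielsenAux

lemma sum_mulVec {ι : Type*} [Fintype ι] {κ : Type*} (s : Finset κ)
    (A : κ → Matrix ι ι ℂ) (v : ι → ℂ) :
    (∑ k ∈ s, A k).mulVec v = ∑ k ∈ s, (A k).mulVec v := by
  ext i
  simp [Matrix.mulVec, dotProduct, Matrix.sum_apply, Finset.sum_apply, Finset.sum_mul]
  rw [Finset.sum_comm]

lemma tensorVec_smul_left {a b : ℕ} (z : ℂ) (u : Fin a → ℂ) (v : Fin b → ℂ) :
    tensorVec (z • u) v = z • tensorVec u v := by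
  ext ⟨i, j⟩; simp [tensorVec, mul_assoc]

lemma conjTranspose_mul_self_sum {M : ℕ} {χ : Fin M → Fin M → ℂ} (hχ : OrthonormalFam χ)
    (σ : Equiv.Perm (Fin M)) (c : Fin M → ℂ) :
    (∑ m, c m • outer (χ (σ m)) (χ m))ᴴ * (∑ m, c m • outer (χ (σ m)) (χ m)) =
      ∑ m, (star (c m) * c m) • outer (χ m) (χ m) := by
  rw [Matrix.conjTranspose_sum, Finset.sum_mul_sum]
  refine Finset.sum_congr rfl fun m _ => ?_
  rw [Finset.sum_eq_single m]
  · rw [Matrix.conjTranspose_smul, outer_conjTranspose, smul_mul_assoc, mul_smul_comm,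
      outer_mul_outer, hχ, if_pos rfl, smul_smul, smul_smul, mul_one]
  · intro m' _ hne
    rw [Matrix.conjTranspose_smul, outer_conjTranspose, smul_mul_assoc, mul_smul_comm,
      outer_mul_outer, hχ, if_neg (fun h => hne (σ.injective h).symm)]
    simp
  · simp

lemma sum_outer_mulVec {M : ℕ} {χ : Fin M → Fin M → ℂ} (hχ : OrthonormalFam χ)
    (σ : Fin M → Fin M) (c : Fin M → ℂ) (m : Fin M) :
    (∑ m', c m' • outer (χ (σ m')) (χ m')).mulVec (χ m) = c m • χ (σ m) := by
  rw [sum_mulVec, Finset.sum_eq_single m]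
  · rw [Matrix.smul_mulVec, outer_mulVec, hχ, if_pos rfl, one_smul]
  · intro m' _ hne
    rw [Matrix.smul_mulVec, outer_mulVec, hχ, if_neg hne]
    simp
  · simp

end NielsenAux

end

open NielsenAux in
/-- The inductive step in the proof of the hard direction of Nielsen's theorem: transferring
weight `δ` from a smaller coefficient `p_K` to a larger one `p_J` can be realized exactly by a
two-Kraus-operator map of the local form `ω ↦ (C⊗U)ω(C⊗U)ᴴ + (D⊗V)ω(D⊗V)ᴴ`. -/
theorem nielsen_inductive_step (M : ℕ) (hM : 1 ≤ M) (χ κ : Fin M → Fin M → ℂ)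
    (hχ : OrthonormalFam χ) (hκ : OrthonormalFam κ)
    (p : Fin M → ℝ) (hp0 : ∀ m, 0 ≤ p m) (J K : Fin M) (hJK : J ≠ K)
    (hpJK : p K ≤ p J) (δ : ℝ) (hδ0 : 0 < δ) (hδK : δ ≤ p K)
    (r : Fin M → ℝ)
    (hr : r = Function.update (Function.update p J (p J + δ)) K (p K - δ)) :
    ∃ C D U V : Matrix (Fin M) (Fin M) ℂ,
      Cᴴ * C + Dᴴ * D = 1 ∧
      U ∈ Matrix.unitaryGroup (Fin M) ℂ ∧ V ∈ Matrix.unitaryGroup (Fin M) ℂ ∧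
      (C ⊗ₖ U) * projVec (∑ m, (Real.sqrt (p m) : ℂ) • tensorVec (χ m) (κ m)) * (C ⊗ₖ U)ᴴ +
          (D ⊗ₖ V) * projVec (∑ m, (Real.sqrt (p m) : ℂ) • tensorVec (χ m) (κ m)) *
            (D ⊗ₖ V)ᴴ =
        projVec (∑ m, (Real.sqrt (r m) : ℂ) • tensorVec (χ m) (κ m)) := by
  classical
  have hpK : 0 < p K := lt_of_lt_of_le hδ0 hδK
  have hpJ : 0 < p J := lt_of_lt_of_le hpK hpJK
  have hrJ : r J = p J + δ := by
    subst hr; rw [Function.update_of_ne hJK, Function.update_self]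
  have hrK : r K = p K - δ := by subst hr; rw [Function.update_self]
  have hrm : ∀ m, m ≠ J → m ≠ K → r m = p m := by
    intro m hmJ hmK
    subst hr; rw [Function.update_of_ne hmK, Function.update_of_ne hmJ]
  have hr0 : ∀ m, 0 ≤ r m := by
    intro m
    by_cases h1 : m = J
    · subst h1; rw [hrJ]; linarith [hp0 m]
    by_cases h2 : m = K
    · subst h2; rw [hrK]; linarith
    · rw [hrm m h1 h2]; exact hp0 m
  set w : ℝ := p J - p K + 2 * δ with hw
  have hw0 : 0 < w := by simp only [hw]; linarith
  set t : ℝ := (p J - p K) / w with ht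
  have ht0 : 0 ≤ t := div_nonneg (by linarith) hw0.le
  have ht1 : t ≤ 1 := by
    rw [ht, div_le_one hw0]; linarith
  set A : ℝ := (1 + t) / 2 with hA
  set B : ℝ := (1 - t) / 2 with hB
  have hA0 : 0 ≤ A := by rw [hA]; linarith
  have hB0 : 0 ≤ B := by rw [hB]; linarith
  have hAB : A + B = 1 := by rw [hA, hB]; ring
  have hJid : A * r J + B * r K = p J := by
    rw [hrJ, hrK, hA, hB, ht, hw]
    field_simp [ne_of_gt (show (0:ℝ) < p J - p K + 2 * δ by linarith)]
    ring
  have hKid : A * r K + B * r J = p K := by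
    rw [hrJ, hrK, hA, hB, ht, hw]
    field_simp [ne_of_gt (show (0:ℝ) < p J - p K + 2 * δ by linarith)]
    ring
  set α : ℝ := Real.sqrt A with hα
  set β : ℝ := Real.sqrt B with hβ
  have hα2 : α ^ 2 = A := Real.sq_sqrt hA0
  have hβ2 : β ^ 2 = B := Real.sq_sqrt hB0
  set σ : Equiv.Perm (Fin M) := Equiv.swap J K with hσ
  have hσJ : σ J = K := Equiv.swap_apply_left J K
  have hσK : σ K = J := Equiv.swap_apply_right J K
  have hσm : ∀ m, m ≠ J → m ≠ K → σ m = m := fun m h1 h2 =>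
    Equiv.swap_apply_of_ne_of_ne h1 h2
  set c : Fin M → ℝ := fun m =>
    if p m = 0 then α else α * Real.sqrt (r m) / Real.sqrt (p m) with hc
  set d : Fin M → ℝ := fun m =>
    if p m = 0 then β else β * Real.sqrt (r (σ m)) / Real.sqrt (p m) with hd
  -- key coefficient identities
  have hpm_ne : ∀ m, p m ≠ 0 → Real.sqrt (p m) ≠ 0 := fun m h =>
    Real.sqrt_ne_zero'.mpr (lt_of_le_of_ne (hp0 m) (Ne.symm h))
  have hcoefc : ∀ m, Real.sqrt (p m) * c m = α * Real.sqrt (r m) := by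
    intro m
    by_cases h : p m = 0
    · have hmJ : m ≠ J := fun e => by rw [e] at h; exact absurd h hpJ.ne'
      have hmK : m ≠ K := fun e => by rw [e] at h; exact absurd h hpK.ne'
      rw [hc]; simp only [h, if_pos rfl]
      rw [hrm m hmJ hmK, h, Real.sqrt_zero]; ring
    · have h2 : Real.sqrt (p m) ≠ 0 := hpm_ne m h
      rw [hc]; simp only [h, if_neg h, if_false]
      field_simp
  have hcoefd : ∀ m, Real.sqrt (p m) * d m = β * Real.sqrt (r (σ m)) := by
    intro m
    by_cases h : p m = 0
    · have hmJ : m ≠ J := fun e => by rw [e] at h; exact absurd h hpJ.ne'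
      have hmK : m ≠ K := fun e => by rw [e] at h; exact absurd h hpK.ne'
      rw [hd]; simp only [h, if_pos rfl]
      rw [hσm m hmJ hmK, hrm m hmJ hmK, h, Real.sqrt_zero]; ring
    · have h2 : Real.sqrt (p m) ≠ 0 := hpm_ne m h
      rw [hd]; simp only [h, if_neg h, if_false]
      field_simp
  -- normalization
  have hnorm : ∀ m, c m ^ 2 + d m ^ 2 = 1 := by
    intro m
    by_cases h : p m = 0
    · rw [hc, hd]; simp only [h, if_true, ite_true, eq_self_iff_true]
      rw [hα2, hβ2]; exact hAB
    have hpmpos : 0 < p m := lt_of_le_of_ne (hp0 m) (Ne.symm h)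
    have e1 : c m ^ 2 = A * r m / p m := by
      rw [hc]; simp only [if_neg h]
      rw [div_pow, mul_pow, hα2, Real.sq_sqrt (hr0 m), Real.sq_sqrt (hp0 m)]
    have e2 : d m ^ 2 = B * r (σ m) / p m := by
      rw [hd]; simp only [if_neg h]
      rw [div_pow, mul_pow, hβ2, Real.sq_sqrt (hr0 (σ m)), Real.sq_sqrt (hp0 m)]
    rw [e1, e2, ← add_div, div_eq_one_iff_eq (ne_of_gt hpmpos)]
    by_cases h1 : m = J
    · subst h1; rw [hσJ]; linarith [hJid]
    by_cases h2 : m = K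
    · subst h2; rw [hσK]; linarith [hKid]
    · rw [hσm m h1 h2, hrm m h1 h2]; nlinarith [hAB]
  -- the matrices
  refine ⟨∑ m, (c m : ℂ) • outer (χ m) (χ m),
          ∑ m, (d m : ℂ) • outer (χ (σ m)) (χ m),
          1,
          ∑ m, outer (κ (σ m)) (κ m), ?_, ?_, ?_, ?_⟩
  · -- C†C + D†D = 1
    have e1 := conjTranspose_mul_self_sum hχ (Equiv.refl (Fin M)) (fun m => (c m : ℂ))
    have e2 := conjTranspose_mul_self_sum hχ σ (fun m => (d m : ℂ))
    simp only [Equiv.refl_apply] at e1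
    rw [e1, e2, ← Finset.sum_add_distrib]
    have hterm : ∀ m : Fin M, (star ((c m : ℝ) : ℂ) * ((c m : ℝ) : ℂ)) • outer (χ m) (χ m) +
        (star ((d m : ℝ) : ℂ) * ((d m : ℝ) : ℂ)) • outer (χ m) (χ m) = outer (χ m) (χ m) := by
      intro m
      rw [← add_smul]
      have hcd : (star ((c m : ℝ) : ℂ) * ((c m : ℝ) : ℂ)) +
          (star ((d m : ℝ) : ℂ) * ((d m : ℝ) : ℂ)) = 1 := by
        have h2 : c m * c m + d m * d m = 1 := by
          have h3 := hnorm m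
          rwa [pow_two, pow_two] at h3
        simp only [Complex.star_def, Complex.conj_ofReal]
        rw [← Complex.ofReal_mul, ← Complex.ofReal_mul, ← Complex.ofReal_add, h2,
          Complex.ofReal_one]
      rw [hcd, one_smul]
    rw [Finset.sum_congr rfl fun m _ => hterm m]
    exact sum_outer_eq_one hχ
  · exact Submonoid.one_mem _
  · -- V unitary
    rw [Matrix.mem_unitaryGroup_iff]
    have e := conjTranspose_mul_self_sum hκ σ (fun _ => (1 : ℂ))
    simp only [one_smul, star_one, one_mul] at e
    rw [star_eq_conjTranspose]
    exact mul_eq_one_comm.mp (e.trans (sum_outer_eq_one hκ))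
  · -- the state equation
    set C := ∑ m, (c m : ℂ) • outer (χ m) (χ m) with hC
    set D := ∑ m, (d m : ℂ) • outer (χ (σ m)) (χ m) with hD
    set V := ∑ m, outer (κ (σ m)) (κ m) with hV
    set Ψ : Fin M × Fin M → ℂ :=
      ∑ m, ((Real.sqrt (p m) : ℝ) : ℂ) • tensorVec (χ m) (κ m) with hΨ
    set Ξ : Fin M × Fin M → ℂ :=
      ∑ m, ((Real.sqrt (r m) : ℝ) : ℂ) • tensorVec (χ m) (κ m) with hΞ
    have hCmv : ∀ m, C.mulVec (χ m) = ((c m : ℝ) : ℂ) • χ m := by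
      intro m
      have h0 := sum_outer_mulVec hχ id (fun m => ((c m : ℝ) : ℂ)) m
      simpa [hC] using h0
    have hDmv : ∀ m, D.mulVec (χ m) = ((d m : ℝ) : ℂ) • χ (σ m) := by
      intro m
      exact sum_outer_mulVec hχ σ (fun m => ((d m : ℝ) : ℂ)) m
    have hVmv : ∀ m, V.mulVec (κ m) = κ (σ m) := by
      intro m
      have h0 := sum_outer_mulVec hκ σ (fun _ => (1 : ℂ)) m
      simpa [hV] using h0
    have hCΨ : (C ⊗ₖ (1 : Matrix (Fin M) (Fin M) ℂ)).mulVec Ψ = ((α : ℝ) : ℂ) • Ξ := by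
      rw [hΨ, NielsenAux.mulVec_sum]
      have h1 : ∀ m, (C ⊗ₖ (1 : Matrix (Fin M) (Fin M) ℂ)).mulVec
          (((Real.sqrt (p m) : ℝ) : ℂ) • tensorVec (χ m) (κ m))
          = (((α : ℝ) : ℂ) * ((Real.sqrt (r m) : ℝ) : ℂ)) • tensorVec (χ m) (κ m) := by
        intro m
        rw [Matrix.mulVec_smul, kron_mulVec, hCmv m, Matrix.one_mulVec,
          tensorVec_smul_left, smul_smul, ← Complex.ofReal_mul, hcoefc m,
          Complex.ofReal_mul]
      rw [Finset.sum_congr rfl fun m _ => h1 m, hΞ, Finset.smul_sum]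
      exact Finset.sum_congr rfl fun m _ => (smul_smul _ _ _).symm
    have hDΨ : (D ⊗ₖ V).mulVec Ψ = ((β : ℝ) : ℂ) • Ξ := by
      rw [hΨ, NielsenAux.mulVec_sum]
      have h1 : ∀ m, (D ⊗ₖ V).mulVec
          (((Real.sqrt (p m) : ℝ) : ℂ) • tensorVec (χ m) (κ m))
          = (((β : ℝ) : ℂ) * ((Real.sqrt (r (σ m)) : ℝ) : ℂ)) •
              tensorVec (χ (σ m)) (κ (σ m)) := by
        intro m
        rw [Matrix.mulVec_smul, kron_mulVec, hDmv m, hVmv m,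
          tensorVec_smul_left, smul_smul, ← Complex.ofReal_mul, hcoefd m,
          Complex.ofReal_mul]
      rw [Finset.sum_congr rfl fun m _ => h1 m]
      calc ∑ m, (((β : ℝ) : ℂ) * ((Real.sqrt (r (σ m)) : ℝ) : ℂ)) •
              tensorVec (χ (σ m)) (κ (σ m))
          = ∑ m, (((β : ℝ) : ℂ) * ((Real.sqrt (r m) : ℝ) : ℂ)) •
              tensorVec (χ m) (κ m) :=
            Equiv.sum_comp σ (fun m => (((β : ℝ) : ℂ) * ((Real.sqrt (r m) : ℝ) : ℂ)) •
              tensorVec (χ m) (κ m))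
        _ = ((β : ℝ) : ℂ) • Ξ := by
            rw [hΞ, Finset.smul_sum]
            exact Finset.sum_congr rfl fun m _ => (smul_smul _ _ _).symm
    rw [conj_projVec, conj_projVec, hCΨ, hDΨ, projVec_smul, projVec_smul, ← add_smul]
    have hone : ((α : ℝ) : ℂ) * star ((α : ℝ) : ℂ) + ((β : ℝ) : ℂ) * star ((β : ℝ) : ℂ)
        = 1 := by
      have h2 : α * α + β * β = 1 := by
        rw [← pow_two, ← pow_two, hα2, hβ2]; exact hAB
      simp only [Complex.star_def, Complex.conj_ofReal]
      rw [← Complex.ofReal_mul, ← Complex.ofReal_mul, ← Complex.ofReal_add, h2,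
        Complex.ofReal_one]
    rw [hone, one_smul]
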